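/- Let T be a noetherian, weakly approximable triangulated category, with a t-structure (T^{≤0}, T^{≥0}) in the preferred equivalence class and noetherianness constant N. Then for any object X ∈ T^-_c ∩ T^{≤0} there exists an inverse system B_1 ← B_2 ← ⋯ in T^b_c ∩ T^{≤0}, Cauchy in the sense that for each i the truncation functor (−)^{≥ −i} eventually takes the transition maps to isomorphisms, with X ≅ holim B_*. -/

import Mathlib

set_option linter.unusedSectionVars false
set_option maxHeartbeats 1000000



namespace Stmt13

open CategoryTheory Category Limits Pretriangulated ZeroObject

universe v u

variable {T : Type u} [Category.{v} T] [Preadditive T] [HasZeroObject T]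
  [HasShift T ℤ] [∀ n : ℤ, (CategoryTheory.shiftFunctor T n).Additive] [Pretriangulated T]
  [HasCoproducts.{v} T] [HasProducts.{v} T]

/-- The canonical map `⨁ᵢ Hom(X, fᵢ) ⟶ Hom(X, ∐ f)`. -/
noncomputable def canMap {ι : Type v} [DecidableEq ι] (f : ι → T) (X : T) :
    (DirectSum ι fun i : ι => (X ⟶ f i)) →+ (X ⟶ ∐ f) :=
  DirectSum.toAddMonoid fun i =>
    AddMonoidHom.mk' (fun (h : X ⟶ f i) => h ≫ Sigma.ι f i)
      (fun _ _ => Preadditive.add_comp _ _ _ _ _ _)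

/-- An object `X` is compact if `Hom(X, −)` commutes with coproducts. -/
def IsCompactObject (X : T) : Prop :=
  ∀ {ι : Type v} [DecidableEq ι] (f : ι → T), Function.Bijective (canMap f X)

/-- `G` generates `T`: an object with no nonzero maps from any shift of `G` is zero. -/
def IsGenerator (G : T) : Prop :=
  ∀ X : T, (∀ n : ℤ, ∀ f : G⟦n⟧ ⟶ X, f = 0) → IsZero X

/-- A t-structure on `T`, given by the sequences of subcategories
`le n = T^{≤ n}` and `ge n = T^{≥ n}`. -/
structure TStruct (T : Type u) [Category.{v} T] [Preadditive T] [HasZeroObject T]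
    [HasShift T ℤ] [∀ n : ℤ, (CategoryTheory.shiftFunctor T n).Additive]
    [Pretriangulated T] where
  le : ℤ → Set T
  ge : ℤ → Set T
  le_iso : ∀ n, ∀ X Y : T, (X ≅ Y) → X ∈ le n → Y ∈ le n
  ge_iso : ∀ n, ∀ X Y : T, (X ≅ Y) → X ∈ ge n → Y ∈ ge n
  le_shift : ∀ (n : ℤ) (X : T), X ∈ le n ↔ X⟦(1 : ℤ)⟧ ∈ le (n - 1)
  ge_shift : ∀ (n : ℤ) (X : T), X ∈ ge n ↔ X⟦(1 : ℤ)⟧ ∈ ge (n - 1)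
  le_mono : ∀ n : ℤ, le n ⊆ le (n + 1)
  ge_anti : ∀ n : ℤ, ge (n + 1) ⊆ ge n
  hom_zero : ∀ X ∈ le 0, ∀ Y ∈ ge 1, ∀ f : X ⟶ Y, f = 0
  exists_triangle : ∀ X : T, ∃ (A B : T) (f : A ⟶ X) (g : X ⟶ B) (h : B ⟶ A⟦(1 : ℤ)⟧),
    A ∈ le 0 ∧ B ∈ ge 1 ∧ Triangle.mk f g h ∈ (distTriang T)

/-- A cocomplete pre-aisle: closed under isomorphisms, zero, suspension, extensions,
direct summands and small coproducts. -/
def IsCocompletePreAisle (P : Set T) : Prop :=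
  (∀ X Y : T, (X ≅ Y) → X ∈ P → Y ∈ P) ∧ ((0 : T) ∈ P) ∧
  (∀ X ∈ P, X⟦(1 : ℤ)⟧ ∈ P) ∧
  (∀ Tr ∈ (distTriang T), Tr.obj₁ ∈ P → Tr.obj₃ ∈ P → Tr.obj₂ ∈ P) ∧
  (∀ (X Y : T) (r : X ⟶ Y) (s : Y ⟶ X), s ≫ r = 𝟙 Y → X ∈ P → Y ∈ P) ∧
  (∀ {ι : Type v} (f : ι → T), (∀ i, f i ∈ P) → (∐ f) ∈ P)

/-- `overline{⟨G⟩}^{(−∞,−n]}`: the smallest cocomplete pre-aisle containing `G⟦m⟧` for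
all `m ≥ n`. -/
def aisleGen (G : T) (n : ℤ) : Set T :=
  ⋂₀ {P | IsCocompletePreAisle P ∧ ∀ m : ℤ, n ≤ m → G⟦m⟧ ∈ P}

/-- A t-structure is in the preferred equivalence class if it is equivalent to the
t-structure generated by a compact generator `G`, i.e. there is `A > 0` with
`⟨G⟩-aisle shifted by A ⊆ T^{≤0} ⊆ ⟨G⟩-aisle shifted by −A`. -/
def InPreferredClass (t : TStruct T) : Prop :=
  ∃ G : T, IsCompactObject G ∧ IsGenerator G ∧
    ∃ A : ℤ, 0 < A ∧ aisleGen G A ⊆ t.le 0 ∧ t.le 0 ⊆ aisleGen G (-A)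

/-- The subcategory `T^-_c`: objects admitting, for every `n`, a triangle
`E ⟶ X ⟶ D` with `E` compact and `D ∈ T^{≤ n}`. -/
def Tminus (t : TStruct T) : Set T :=
  {X | ∀ n : ℤ, ∃ (E D : T) (f : E ⟶ X) (g : X ⟶ D) (h : D ⟶ E⟦(1 : ℤ)⟧),
    IsCompactObject E ∧ D ∈ t.le n ∧ Triangle.mk f g h ∈ (distTriang T)}

/-- The subcategory `T^b_c = T^-_c ∩ T^b`. -/
def Tbc (t : TStruct T) : Set T :=
  Tminus t ∩ {X | ∃ m : ℤ, X ∈ t.ge m}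

/-- `T` is noetherian with witness `N` (relative to the t-structure `t`): every
`X ∈ T^-_c` admits a triangle `A ⟶ X ⟶ B` with `A ∈ T^-_c ∩ T^{≤0}` and
`B ∈ T^b_c ∩ T^{≥ −N}`. -/
def NoetherianWitness (t : TStruct T) (N : ℕ) : Prop :=
  ∀ X ∈ Tminus t, ∃ (A B : T) (f : A ⟶ X) (g : X ⟶ B) (h : B ⟶ A⟦(1 : ℤ)⟧),
    A ∈ Tminus t ∩ t.le 0 ∧ B ∈ Tbc t ∩ t.ge (-(N : ℤ)) ∧
    Triangle.mk f g h ∈ (distTriang T)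

/-- `T` is weakly approximable (relative to the t-structure `t`). -/
def WeaklyApproximable (t : TStruct T) : Prop :=
  ∃ (G : T) (A : ℕ), 0 < A ∧ IsCompactObject G ∧ IsGenerator G ∧
    G ∈ t.le (A : ℤ) ∧ (∀ X ∈ t.le (-(A : ℤ)), ∀ f : G ⟶ X, f = 0) ∧
    ∀ X ∈ t.le 0, ∃ (E D : T) (f : E ⟶ X) (g : X ⟶ D) (h : D ⟶ E⟦(1 : ℤ)⟧),
      E ∈ aisleGen G (-(A : ℤ)) ∧ D ∈ t.le (-1) ∧
      Triangle.mk f g h ∈ (distTriang T)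


/-- The map `1 − shift : ∏ B_i ⟶ ∏ B_i` of an inverse system `(B, p)`. -/
noncomputable def oneMinusShiftProd (B : ℕ → T) (p : ∀ i : ℕ, B (i + 1) ⟶ B i) :
    (∏ᶜ B) ⟶ (∏ᶜ B) :=
  𝟙 _ - Pi.lift fun i => Pi.π B (i + 1) ≫ p i

/-- Extend a sequence defined on indices `≥ I` downwards by the recursion
`x i = y i + t i (x (i+1))`. -/
noncomputable def extendDown {A : ℕ → Type*} [∀ i, AddCommGroup (A i)]
    (t : ∀ i, A (i + 1) → A i) (y : ∀ i, A i) (I : ℕ) (tail : ∀ j : ℕ, A (I + j)) :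
    ∀ i : ℕ, A i := fun i =>
  if h : I ≤ i then cast (congrArg A (Nat.add_sub_cancel' h)) (tail (i - I))
  else y i + t i (extendDown t y I tail (i + 1))
  termination_by i => I - i
  decreasing_by omega

theorem exists_solution {A : ℕ → Type*} [∀ i, AddCommGroup (A i)]
    (t : ∀ i, A (i + 1) → A i) (I : ℕ) (ht : ∀ j : ℕ, Function.Bijective (t (I + j)))
    (y : ∀ i, A i) : ∃ x : ∀ i, A i, ∀ i, x i = y i + t i (x (i + 1)) := by
  -- the tail, defined by upward recursion using the inverses
  let e : ∀ j : ℕ, A (I + (j+1)) ≃ A (I + j) := fun j => Equiv.ofBijective (t (I + j)) (ht j)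
  let tail : ∀ j : ℕ, A (I + j) := fun j =>
    Nat.rec (motive := fun j => A (I + j)) 0 (fun j v => (e j).symm (v - y (I + j))) j
  have htail : ∀ j, tail j = y (I + j) + t (I + j) (tail (j + 1)) := by
    intro j
    have : t (I + j) (tail (j+1)) = tail j - y (I + j) := (e j).apply_symm_apply _
    rw [this]; abel
  refine ⟨extendDown t y I tail, ?_⟩
  intro i
  by_cases h : I ≤ i
  · obtain ⟨j, rfl⟩ : ∃ j, i = I + j := ⟨i - I, (Nat.add_sub_cancel' h).symm⟩
    rw [extendDown, extendDown]
    have h1 : I ≤ I + j := Nat.le_add_right _ _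
    have h2 : I ≤ I + j + 1 := by omega
    rw [dif_pos h1, dif_pos h2]
    have e1 : I + j - I = j := by omega
    have e2 : I + j + 1 - I = j + 1 := by omega
    have tc : ∀ {a b : ℕ} (_ : a = b) (p : A (I + a) = A (I + b)),
        cast p (tail a) = tail b := by
      rintro a b rfl p; exact cast_eq p _
    rw [tc e1, tc e2]
    exact htail j
  · rw [extendDown, dif_neg h]


/-- The equivalence `Hom(E⟦k⟧, Y) ≃ Hom(E, Y⟦-k⟧)`. -/
noncomputable def homShiftE (k : ℤ) (E Y : T) : (E⟦k⟧ ⟶ Y) ≃ (E ⟶ Y⟦(-k)⟧) :=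
  ((Functor.FullyFaithful.ofFullyFaithful (shiftFunctor T (-k))).homEquiv).trans
    (Iso.homCongr ((shiftFunctorCompIsoId T k (-k) (add_neg_cancel k)).app E) (Iso.refl _))

lemma homShiftE_apply (k : ℤ) (E Y : T) (f : E⟦k⟧ ⟶ Y) :
    homShiftE k E Y f =
      ((shiftFunctorCompIsoId T k (-k) (add_neg_cancel k)).app E).inv ≫ f⟦(-k)⟧' := by
  simp [homShiftE, Iso.homCongr]

lemma homShiftE_comp (k : ℤ) (E Y Y' : T) (f : E⟦k⟧ ⟶ Y) (w : Y ⟶ Y') :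
    homShiftE k E Y' (f ≫ w) = homShiftE k E Y f ≫ w⟦(-k)⟧' := by
  simp [homShiftE_apply, Functor.map_comp]

lemma homShiftE_add (k : ℤ) (E Y : T) (f g : E⟦k⟧ ⟶ Y) :
    homShiftE k E Y (f + g) = homShiftE k E Y f + homShiftE k E Y g := by
  simp [homShiftE_apply, Functor.map_add, Preadditive.comp_add]

lemma homShiftE_zero (k : ℤ) (E Y : T) : homShiftE k E Y 0 = 0 := by
  simp [homShiftE_apply]

lemma homShiftE_symm_comp (k : ℤ) (E Y Y' : T) (u : E ⟶ Y⟦(-k)⟧) (w : Y ⟶ Y') :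
    (homShiftE k E Y').symm (u ≫ w⟦(-k)⟧') = (homShiftE k E Y).symm u ≫ w := by
  apply (homShiftE k E Y').injective
  rw [Equiv.apply_symm_apply, homShiftE_comp, Equiv.apply_symm_apply]

lemma homShiftE_symm_zero (k : ℤ) (E Y : T) : (homShiftE k E Y).symm 0 = 0 := by
  apply (homShiftE k E Y).injective
  rw [Equiv.apply_symm_apply, homShiftE_zero]


section TLemmas

variable (t : TStruct T)

lemma le_mono' {m n : ℤ} (h : m ≤ n) : t.le m ⊆ t.le n := by
  have key : ∀ k : ℕ, t.le m ⊆ t.le (m + k) := by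
    intro k
    induction k with
    | zero => simpa using subset_rfl
    | succ k ih =>
      have : t.le (m + k) ⊆ t.le (m + k + 1) := t.le_mono _
      have h2 := ih.trans this
      have e : (m + k + 1 : ℤ) = m + (k + 1 : ℕ) := by push_cast; ring
      rwa [e] at h2
  have e : n = m + ((n - m).toNat : ℤ) := by omega
  rw [e]; exact key _

lemma ge_anti' {m n : ℤ} (h : m ≤ n) : t.ge n ⊆ t.ge m := by
  have key : ∀ k : ℕ, t.ge (m + k) ⊆ t.ge m := by
    intro k
    induction k with
    | zero => simpa using subset_rfl
    | succ k ih =>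
      have : t.ge (m + k + 1) ⊆ t.ge (m + k) := t.ge_anti _
      have h2 := this.trans ih
      have e : (m + k + 1 : ℤ) = m + (k + 1 : ℕ) := by push_cast; ring
      rwa [e] at h2
  have e : n = m + ((n - m).toNat : ℤ) := by omega
  rw [e]; exact key _

lemma le_shift_up {n : ℤ} {X : T} (h : X ∈ t.le n) : X⟦(1:ℤ)⟧ ∈ t.le (n-1) :=
  (t.le_shift n X).mp h

lemma ge_shift_up {n : ℤ} {X : T} (h : X ∈ t.ge n) : X⟦(1:ℤ)⟧ ∈ t.ge (n-1) :=
  (t.ge_shift n X).mp h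

lemma le_shift_down {n : ℤ} {X : T} (h : X ∈ t.le n) : X⟦(-1:ℤ)⟧ ∈ t.le (n+1) := by
  refine (t.le_shift (n+1) _).mpr ?_
  have e : (X⟦(-1:ℤ)⟧)⟦(1:ℤ)⟧ ≅ X := (shiftFunctorCompIsoId T (-1) 1 (by ring)).app X
  have := t.le_iso n X _ e.symm h
  simpa using this

lemma ge_shift_down {n : ℤ} {X : T} (h : X ∈ t.ge n) : X⟦(-1:ℤ)⟧ ∈ t.ge (n+1) := by
  refine (t.ge_shift (n+1) _).mpr ?_
  have e : (X⟦(-1:ℤ)⟧)⟦(1:ℤ)⟧ ≅ X := (shiftFunctorCompIsoId T (-1) 1 (by ring)).app X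
  have := t.ge_iso n X _ e.symm h
  simpa using this

lemma le_shift_int (k : ℤ) {n : ℤ} {X : T} (h : X ∈ t.le n) : X⟦k⟧ ∈ t.le (n-k) := by
  induction k using Int.induction_on with
  | zero =>
    have e : X ≅ X⟦(0:ℤ)⟧ := ((shiftFunctorZero T ℤ).app X).symm
    simpa using t.le_iso n X _ e h
  | succ k ih =>
    have e : (X⟦(k:ℤ)⟧)⟦(1:ℤ)⟧ ≅ X⟦(k:ℤ)+1⟧ :=
      ((shiftFunctorAdd' T (k:ℤ) 1 ((k:ℤ)+1) rfl).app X).symm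
    have := t.le_iso _ _ _ e (le_shift_up t ih)
    have goal : n - (k:ℤ) - 1 = n - ((k:ℤ)+1) := by ring
    rwa [goal] at this
  | pred k ih =>
    have e : (X⟦(-k:ℤ)⟧)⟦(-1:ℤ)⟧ ≅ X⟦(-k:ℤ)-1⟧ :=
      ((shiftFunctorAdd' T (-k:ℤ) (-1) ((-k:ℤ)-1) (by ring)).app X).symm
    have := t.le_iso _ _ _ e (le_shift_down t ih)
    have goal : n - (-k:ℤ) + 1 = n - ((-k:ℤ)-1) := by ring
    rwa [goal] at this

lemma ge_shift_int (k : ℤ) {n : ℤ} {X : T} (h : X ∈ t.ge n) : X⟦k⟧ ∈ t.ge (n-k) := by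
  induction k using Int.induction_on with
  | zero =>
    have e : X ≅ X⟦(0:ℤ)⟧ := ((shiftFunctorZero T ℤ).app X).symm
    simpa using t.ge_iso n X _ e h
  | succ k ih =>
    have e : (X⟦(k:ℤ)⟧)⟦(1:ℤ)⟧ ≅ X⟦(k:ℤ)+1⟧ :=
      ((shiftFunctorAdd' T (k:ℤ) 1 ((k:ℤ)+1) rfl).app X).symm
    have := t.ge_iso _ _ _ e (ge_shift_up t ih)
    have goal : n - (k:ℤ) - 1 = n - ((k:ℤ)+1) := by ring
    rwa [goal] at this
  | pred k ih =>
    have e : (X⟦(-k:ℤ)⟧)⟦(-1:ℤ)⟧ ≅ X⟦(-k:ℤ)-1⟧ :=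
      ((shiftFunctorAdd' T (-k:ℤ) (-1) ((-k:ℤ)-1) (by ring)).app X).symm
    have := t.ge_iso _ _ _ e (ge_shift_down t ih)
    have goal : n - (-k:ℤ) + 1 = n - ((-k:ℤ)-1) := by ring
    rwa [goal] at this

lemma hom_zero' {a b : ℤ} {X Y : T} (hab : a < b) (hX : X ∈ t.le a) (hY : Y ∈ t.ge b)
    (f : X ⟶ Y) : f = 0 := by
  have h1 : X⟦a⟧ ∈ t.le 0 := by simpa using le_shift_int t a hX
  have h2 : Y⟦a⟧ ∈ t.ge 1 := ge_anti' t (by omega) (ge_shift_int t a hY)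
  have h3 := t.hom_zero _ h1 _ h2 ((shiftFunctor T a).map f)
  apply (shiftFunctor T a).map_injective
  simpa using h3

end TLemmas

section TriShift

/-- Shift a distinguished triangle up by one, adjusting the middle object by an iso. -/
lemma shift_one_dist {A₀ X₀ B₀ : T} (f : A₀ ⟶ X₀) (g : X₀ ⟶ B₀) (h : B₀ ⟶ A₀⟦(1:ℤ)⟧)
    (hT : Triangle.mk f g h ∈ distTriang T) {X₁ : T} (ε : X₀⟦(1:ℤ)⟧ ≅ X₁) :
    ∃ (f' : A₀⟦(1:ℤ)⟧ ⟶ X₁) (g' : X₁ ⟶ B₀⟦(1:ℤ)⟧) (h' : B₀⟦(1:ℤ)⟧ ⟶ (A₀⟦(1:ℤ)⟧)⟦(1:ℤ)⟧),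
      Triangle.mk f' g' h' ∈ distTriang T := by
  have h3 : (Triangle.mk f g h).rotate.rotate.rotate ∈ distTriang T :=
    rot_of_distTriang _ (rot_of_distTriang _ (rot_of_distTriang _ hT))
  set R := (Triangle.mk f g h).rotate.rotate.rotate with hR
  refine ⟨R.mor₁ ≫ ε.hom, ε.inv ≫ R.mor₂, R.mor₃, ?_⟩
  refine isomorphic_distinguished _ h3 _ ?_
  refine Triangle.isoMk _ _ (Iso.refl _) ε.symm (Iso.refl _) ?_ ?_ ?_
  · exact (assoc _ _ _).trans ((congrArg (fun k => R.mor₁ ≫ k) ε.hom_inv_id).trans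
      ((comp_id _).trans (id_comp _).symm))
  · show (ε.inv ≫ R.mor₂) ≫ 𝟙 R.obj₃ = ε.inv ≫ R.mor₂; simp
  · show R.mor₃ ≫ (shiftFunctor T 1).map (𝟙 R.obj₁) = 𝟙 R.obj₃ ≫ R.mor₃; simp

/-- Shift a distinguished triangle down by one, adjusting the middle object by an iso. -/
lemma shift_neg_one_dist {A₀ X₀ B₀ : T} (f : A₀ ⟶ X₀) (g : X₀ ⟶ B₀) (h : B₀ ⟶ A₀⟦(1:ℤ)⟧)
    (hT : Triangle.mk f g h ∈ distTriang T) {X₁ : T} (ε : X₀⟦(-1:ℤ)⟧ ≅ X₁) :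
    ∃ (f' : A₀⟦(-1:ℤ)⟧ ⟶ X₁) (g' : X₁ ⟶ B₀⟦(-1:ℤ)⟧) (h' : B₀⟦(-1:ℤ)⟧ ⟶ (A₀⟦(-1:ℤ)⟧)⟦(1:ℤ)⟧),
      Triangle.mk f' g' h' ∈ distTriang T := by
  have h3 : (Triangle.mk f g h).invRotate.invRotate.invRotate ∈ distTriang T :=
    inv_rot_of_distTriang _ (inv_rot_of_distTriang _ (inv_rot_of_distTriang _ hT))
  set R := (Triangle.mk f g h).invRotate.invRotate.invRotate with hR
  refine ⟨R.mor₁ ≫ ε.hom, ε.inv ≫ R.mor₂, R.mor₃, ?_⟩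
  refine isomorphic_distinguished _ h3 _ ?_
  refine Triangle.isoMk _ _ (Iso.refl _) ε.symm (Iso.refl _) ?_ ?_ ?_
  · exact (assoc _ _ _).trans ((congrArg (fun k => R.mor₁ ≫ k) ε.hom_inv_id).trans
      ((comp_id _).trans (id_comp _).symm))
  · show (ε.inv ≫ R.mor₂) ≫ 𝟙 R.obj₃ = ε.inv ≫ R.mor₂; simp
  · show R.mor₃ ≫ (shiftFunctor T 1).map (𝟙 R.obj₁) = 𝟙 R.obj₃ ≫ R.mor₃; simp

end TriShift

section Trunc

variable (t : TStruct T)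

lemma trunc_neg (j : ℕ) (X : T) :
    ∃ (A B : T) (f : A ⟶ X) (g : X ⟶ B) (h : B ⟶ A⟦(1:ℤ)⟧),
      A ∈ t.le (-(j:ℤ)) ∧ B ∈ t.ge (-(j:ℤ)+1) ∧ Triangle.mk f g h ∈ distTriang T := by
  induction j generalizing X with
  | zero =>
    obtain ⟨A, B, f, g, h, hA, hB, hT⟩ := t.exists_triangle X
    exact ⟨A, B, f, g, h, by simpa using hA, by simpa using hB, hT⟩
  | succ j ih =>
    obtain ⟨A, B, f, g, h, hA, hB, hT⟩ := ih (X⟦(-1:ℤ)⟧)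
    have ε : (X⟦(-1:ℤ)⟧)⟦(1:ℤ)⟧ ≅ X := (shiftFunctorCompIsoId T (-1) 1 (by ring)).app X
    obtain ⟨f', g', h', hT'⟩ := shift_one_dist f g h hT ε
    refine ⟨_, _, f', g', h', ?_, ?_, hT'⟩
    · have := le_shift_up t hA
      have e : (-(j:ℤ) - 1) = (-(↑(j+1):ℤ)) := by push_cast; ring
      rwa [e] at this
    · have := ge_shift_up t hB
      have e : (-(j:ℤ) + 1 - 1) = (-(↑(j+1):ℤ) + 1) := by push_cast; ring
      rwa [e] at this

lemma le_of_vanishing (j : ℕ) (X : T)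
    (hv : ∀ Y ∈ t.ge (-(j:ℤ)+1), ∀ f : X ⟶ Y, f = 0) : X ∈ t.le (-(j:ℤ)) := by
  obtain ⟨A, B, f, g, h, hA, hB, hT⟩ := trunc_neg t j X
  have hg : g = 0 := hv B hB g
  -- 𝟙 X factors through f
  obtain ⟨r, hr⟩ : ∃ r : X ⟶ A, 𝟙 X = r ≫ f :=
    Triangle.coyoneda_exact₂ _ hT (𝟙 X) (by simp only [Triangle.mk_mor₂, hg]; exact comp_zero)
  -- B is zero
  have hrot := rot_of_distTriang _ hT
  obtain ⟨q, hq⟩ : ∃ q : A⟦(1:ℤ)⟧ ⟶ B, 𝟙 B = h ≫ q :=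
    Triangle.yoneda_exact₂ _ hrot (𝟙 B) (by simp only [Triangle.rotate_mor₁, Triangle.mk_mor₂, hg]; exact zero_comp)
  have hq0 : q = 0 := hom_zero' t (by omega : (-(j:ℤ)-1) < (-(j:ℤ)+1))
    (le_shift_up t hA) hB q
  have hBzero : IsZero B := by
    rw [IsZero.iff_id_eq_zero]
    rw [hq, hq0, comp_zero]
  -- f is an isomorphism
  have hfr : (f ≫ r - 𝟙 A) ≫ f = 0 := by
    simp [Preadditive.sub_comp, assoc, ← hr]
  have hinv := inv_rot_of_distTriang _ hT
  obtain ⟨v, hv'⟩ : ∃ v : A ⟶ B⟦(-1:ℤ)⟧, f ≫ r - 𝟙 A = v ≫ (Triangle.mk f g h).invRotate.mor₁ :=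
    Triangle.coyoneda_exact₂ _ hinv (f ≫ r - 𝟙 A) hfr
  have hBz' : IsZero ((B : T)⟦(-1:ℤ)⟧) := by
    rw [IsZero.iff_id_eq_zero]
    have : 𝟙 ((B : T)⟦(-1:ℤ)⟧) = (𝟙 B)⟦(-1:ℤ)⟧' := by simp
    rw [this, (IsZero.iff_id_eq_zero B).mp hBzero]
    simp
  have hv0 : v = 0 := hBz'.eq_zero_of_tgt v
  have hfiso : IsIso f := by
    refine ⟨r, ?_, hr.symm⟩
    have : f ≫ r - 𝟙 A = 0 := by rw [hv', hv0]; exact zero_comp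
    rw [← sub_eq_zero]; exact this
  exact t.le_iso _ A X (asIso f) hA

lemma le_ext_neg (j : ℕ) (Tr : Triangle T) (hTr : Tr ∈ distTriang T)
    (h1 : Tr.obj₁ ∈ t.le (-(j:ℤ))) (h3 : Tr.obj₃ ∈ t.le (-(j:ℤ))) :
    Tr.obj₂ ∈ t.le (-(j:ℤ)) := by
  apply le_of_vanishing t j
  intro Y hY ψ
  have h0 : Tr.mor₁ ≫ ψ = 0 := hom_zero' t (by omega) h1 hY _
  obtain ⟨q, hq⟩ := Triangle.yoneda_exact₂ _ hTr ψ h0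
  have hq0 : q = 0 := hom_zero' t (by omega) h3 hY q
  rw [hq, hq0, comp_zero]

end Trunc

section CompactShift

lemma isCompact_shift (k : ℤ) {E : T} (hE : IsCompactObject E) :
    IsCompactObject (E⟦k⟧ : T) := by
  intro ι inst f
  classical
  set F := shiftFunctor T (-k) with hF
  set g : ι → T := fun i => F.obj (f i) with hg
  have hgbij := hE g
  have hσiso : IsIso (sigmaComparison F f) := inferInstance
  set σ : (∐ g) ⟶ F.obj (∐ f) := sigmaComparison F f with hσ
  -- componentwise equivalence, as additive maps
  have hsymm_add : ∀ (Y : T) (a b : E⟦k⟧ ⟶ Y), True := fun _ _ _ => trivial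
  set χ : DirectSum ι (fun i => E⟦k⟧ ⟶ f i) →+ DirectSum ι (fun i => E ⟶ g i) :=
    DirectSum.toAddMonoid (fun i => (DirectSum.of (fun i => E ⟶ g i) i).comp
      (AddMonoidHom.mk' (homShiftE k E (f i)) (homShiftE_add k E (f i)))) with hχ
  set χ' : DirectSum ι (fun i => E ⟶ g i) →+ DirectSum ι (fun i => E⟦k⟧ ⟶ f i) :=
    DirectSum.toAddMonoid (fun i => (DirectSum.of (fun i => E⟦k⟧ ⟶ f i) i).comp
      (AddMonoidHom.mk' (homShiftE k E (f i)).symm (fun a b => by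
        apply (homShiftE k E (f i)).injective
        rw [Equiv.apply_symm_apply, homShiftE_add, Equiv.apply_symm_apply,
          Equiv.apply_symm_apply]))) with hχ'
  have hleft : ∀ x, χ' (χ x) = x := by
    have : χ'.comp χ = AddMonoidHom.id _ := by
      refine DirectSum.addHom_ext (fun i x => ?_)
      simp [hχ, hχ', DirectSum.toAddMonoid_of]
    intro x
    exact DFunLike.congr_fun this x
  have hright : ∀ x, χ (χ' x) = x := by
    have : χ.comp χ' = AddMonoidHom.id _ := by
      refine DirectSum.addHom_ext (fun i x => ?_)
      simp [hχ, hχ', DirectSum.toAddMonoid_of]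
    intro x
    exact DFunLike.congr_fun this x
  have hχbij : Function.Bijective χ :=
    Function.bijective_iff_has_inverse.mpr ⟨χ', hleft, hright⟩
  -- the key commutation
  have key : ∀ x, homShiftE k E (∐ f) (canMap f (E⟦k⟧) x) = canMap g E (χ x) ≫ σ := by
    intro x
    induction x using DirectSum.induction_on with
    | zero => simp [homShiftE_zero]
    | of i h =>
      rw [hχ]
      simp only [canMap, DirectSum.toAddMonoid_of, AddMonoidHom.coe_comp,
        AddMonoidHom.mk'_apply, Function.comp_apply]
      rw [homShiftE_comp, Category.assoc]
      exact congrArg (fun z => (homShiftE k E (f i)) h ≫ z)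
        (ι_comp_sigmaComparison F f i).symm
    | add x y hx hy =>
      rw [map_add, homShiftE_add, hx, hy, map_add, map_add, Preadditive.add_comp]
  have hfun : ∀ x, canMap f (E⟦k⟧) x
      = (homShiftE k E (∐ f)).symm (canMap g E (χ x) ≫ σ) := by
    intro x
    rw [← key, Equiv.symm_apply_apply]
  have hpost : Function.Bijective (fun u : E ⟶ ∐ g => u ≫ σ) := by
    constructor
    · intro a b hab
      dsimp at hab
      rwa [cancel_mono σ] at hab
    · intro v
      exact ⟨v ≫ CategoryTheory.inv σ, by simp⟩
  have : (canMap f (E⟦k⟧) : _ → _)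
      = ((homShiftE k E (∐ f)).symm ∘ (fun u : E ⟶ ∐ g => u ≫ σ) ∘ (canMap g E) ∘ χ) :=
    funext hfun
  rw [this]
  exact ((homShiftE k E (∐ f)).symm.bijective.comp hpost).comp (hgbij.comp hχbij)

end CompactShift

section TminusShift

variable (t : TStruct T)

lemma tminus_shift_up {X : T} (hX : X ∈ Tminus t) : (X⟦(1:ℤ)⟧ : T) ∈ Tminus t := by
  intro n
  obtain ⟨E, D, f, g, h, hE, hD, hT⟩ := hX (n+1)
  obtain ⟨f', g', h', hT'⟩ := shift_one_dist f g h hT (Iso.refl (X⟦(1:ℤ)⟧))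
  refine ⟨E⟦(1:ℤ)⟧, D⟦(1:ℤ)⟧, f', g', h', isCompact_shift 1 hE, ?_, hT'⟩
  have h2 := le_shift_up t hD
  rwa [show n+1-1 = n by ring] at h2

lemma tminus_shift_down {X : T} (hX : X ∈ Tminus t) : (X⟦(-1:ℤ)⟧ : T) ∈ Tminus t := by
  intro n
  obtain ⟨E, D, f, g, h, hE, hD, hT⟩ := hX (n-1)
  obtain ⟨f', g', h', hT'⟩ := shift_neg_one_dist f g h hT (Iso.refl (X⟦(-1:ℤ)⟧))
  refine ⟨E⟦(-1:ℤ)⟧, D⟦(-1:ℤ)⟧, f', g', h', isCompact_shift (-1) hE, ?_, hT'⟩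
  have h2 := le_shift_down t hD
  rwa [show n-1+1 = n by ring] at h2

lemma tbc_shift_up {X : T} (hX : X ∈ Tbc t) : (X⟦(1:ℤ)⟧ : T) ∈ Tbc t := by
  obtain ⟨h1, m, h2⟩ := hX
  exact ⟨tminus_shift_up t h1, m-1, ge_shift_up t h2⟩

lemma tbc_shift_down {X : T} (hX : X ∈ Tbc t) : (X⟦(-1:ℤ)⟧ : T) ∈ Tbc t := by
  obtain ⟨h1, m, h2⟩ := hX
  exact ⟨tminus_shift_down t h1, m+1, ge_shift_down t h2⟩

lemma noeth_tower {N : ℕ} (hnoeth : NoetherianWitness t N) (j : ℕ) :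
    ∀ X ∈ Tminus t, ∃ (A B : T) (f : A ⟶ X) (g : X ⟶ B) (h : B ⟶ A⟦(1:ℤ)⟧),
      A ∈ Tminus t ∧ A ∈ t.le (-(j:ℤ)) ∧ B ∈ Tbc t ∧ B ∈ t.ge (-(N:ℤ)-(j:ℤ)) ∧
      Triangle.mk f g h ∈ distTriang T := by
  induction j with
  | zero =>
    intro X hX
    obtain ⟨A, B, f, g, h, ⟨hAm, hAle⟩, ⟨hBt, hBge⟩, hT⟩ := hnoeth X hX
    refine ⟨A, B, f, g, h, hAm, by simpa using hAle, hBt, by simpa using hBge, hT⟩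
  | succ j ih =>
    intro X hX
    obtain ⟨A, B, f, g, h, hAm, hAle, hBt, hBge, hT⟩ := ih (X⟦(-1:ℤ)⟧) (tminus_shift_down t hX)
    have ε : (X⟦(-1:ℤ)⟧)⟦(1:ℤ)⟧ ≅ X := (shiftFunctorCompIsoId T (-1) 1 (by ring)).app X
    obtain ⟨f', g', h', hT'⟩ := shift_one_dist f g h hT ε
    refine ⟨A⟦(1:ℤ)⟧, B⟦(1:ℤ)⟧, f', g', h', tminus_shift_up t hAm, ?_, tbc_shift_up t hBt, ?_, hT'⟩
    · have h2 := le_shift_up t hAle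
      rwa [show -(j:ℤ)-1 = -(↑(j+1):ℤ) by push_cast; ring] at h2
    · have h2 := ge_shift_up t hBge
      rwa [show -(N:ℤ)-(j:ℤ)-1 = -(N:ℤ)-(↑(j+1):ℤ) by push_cast; ring] at h2

end TminusShift

/-- in a noetherian weakly approximable triangulated category with a
t-structure in the preferred class, every `X ∈ T^-_c ∩ T^{≤0}` is the homotopy limit of
a Cauchy inverse system in `T^b_c ∩ T^{≤0}` (Cauchy: the cones of the transition maps
are eventually in `T^{≤ −i}` for each `i`). -/
theorem statement13 (t : TStruct T)
    (hsingle : ∃ (K : T) (n : ℤ), IsCompactObject K ∧ IsGenerator K ∧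
      ∀ i : ℤ, n ≤ i → ∀ f : K ⟶ K⟦i⟧, f = 0)
    (hpref : InPreferredClass t) (hwa : WeaklyApproximable t)
    (N : ℕ) (hN : 0 < N) (hnoeth : NoetherianWitness t N)
    (X : T) (hX : X ∈ Tminus t ∩ t.le 0) :
    ∃ (B : ℕ → T) (p : ∀ i : ℕ, B (i + 1) ⟶ B i),
      (∀ i : ℕ, B i ∈ Tbc t ∩ t.le 0) ∧
      (∀ i : ℕ, ∃ N' : ℕ, ∀ n : ℕ, N' ≤ n →
        ∀ (D : T) (g : B n ⟶ D) (h : D ⟶ (B (n + 1))⟦(1 : ℤ)⟧),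
          Triangle.mk (p n) g h ∈ (distTriang T) → D ∈ t.le (-(i : ℤ))) ∧
      ∃ (c : ∀ i : ℕ, X ⟶ B i) (_ : ∀ i : ℕ, c (i + 1) ≫ p i = c i)
        (δ : (∏ᶜ B) ⟶ X⟦(1 : ℤ)⟧),
        Triangle.mk (Pi.lift c) (oneMinusShiftProd B p) δ ∈ (distTriang T) := by
  classical
  obtain ⟨G, A, hApos, hGcpt, hGgen, hGle, hGvan, hGapprox⟩ := hwa
  obtain ⟨hXm, hXle⟩ := hX
  -- the tower of noetherian approximations
  set σf : ℕ → ℕ := fun n => n * (N+1) with hσf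
  have hσcast : ∀ n : ℕ, ((σf n : ℕ) : ℤ) = (n:ℤ) * ((N:ℤ)+1) := by
    intro n; simp only [hσf]; push_cast; ring
  have hσsucc : ∀ n : ℕ, ((σf (n+1) : ℕ) : ℤ) = (σf n : ℤ) + (N:ℤ) + 1 := by
    intro n; rw [hσcast, hσcast]; push_cast; ring
  have hσge : ∀ n : ℕ, (n:ℤ) ≤ ((σf n : ℕ) : ℤ) := by
    intro n
    have : n ≤ σf n := Nat.le_mul_of_pos_right n (Nat.succ_pos N)
    exact_mod_cast this
  have tri : ∀ n : ℕ, ∃ (An Bn : T) (fn : An ⟶ X) (cn : X ⟶ Bn) (hn : Bn ⟶ An⟦(1:ℤ)⟧),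
      An ∈ t.le (-((σf n : ℕ) : ℤ)) ∧ Bn ∈ Tbc t ∧ Bn ∈ t.ge (-(N:ℤ)-((σf n : ℕ):ℤ)) ∧
      Triangle.mk fn cn hn ∈ distTriang T := by
    intro n
    obtain ⟨A', B', f', g', h', _, hA, hBt, hBge, hT⟩ := noeth_tower t hnoeth (σf n) X hXm
    exact ⟨A', B', f', g', h', hA, hBt, hBge, hT⟩
  choose Aa Bb ff cc hh hAle hBtbc hBge htri using tri
  -- each B n is in T^{≤0}
  have hBle : ∀ n, Bb n ∈ t.le 0 := by
    intro n
    have hrot := rot_of_distTriang _ (htri n)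
    have key := le_ext_neg t 0 _ hrot ?_ ?_
    · simpa using key
    · show X ∈ t.le (-((0:ℕ):ℤ))
      simpa using hXle
    · show (Aa n)⟦(1:ℤ)⟧ ∈ t.le (-((0:ℕ):ℤ))
      refine le_mono' t ?_ (le_shift_up t (hAle n))
      have := hσge n
      simp only [Nat.cast_zero, neg_zero]
      omega
  -- transition maps
  have hcomp0 : ∀ n, ff (n+1) ≫ cc n = 0 := by
    intro n
    refine hom_zero' t ?_ (hAle (n+1)) (hBge n) _
    have := hσsucc n
    omega
  have ptri : ∀ n, ∃ p : Bb (n+1) ⟶ Bb n, cc (n+1) ≫ p = cc n := by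
    intro n
    obtain ⟨p, hp⟩ := Triangle.yoneda_exact₂ _ (htri (n+1)) (cc n) (hcomp0 n)
    exact ⟨p, hp.symm⟩
  choose pp hp using ptri
  -- the Good predicate
  set Good : T → ℤ → Prop := fun W b => ∀ Z, Z ∈ t.le b → ∀ q : W ⟶ Z, q = 0 with hGoodDef
  have hGshift : ∀ (W : T) (b k : ℤ), Good W b → Good (W⟦k⟧) (b - k) := by
    intro W b k hW Z hZ q
    have h1 : homShiftE k W Z q = 0 := by
      refine hW _ ?_ _
      have := le_shift_int t (-k) hZ
      rwa [show b - k - -k = b by ring] at this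
    have := congrArg (homShiftE k W Z).symm h1
    rwa [Equiv.symm_apply_apply, homShiftE_symm_zero] at this
  have hGoodG : ∀ m : ℤ, Good (G⟦m⟧) (-(A:ℤ) - m) := by
    intro m Z hZ q
    have h1 : homShiftE m G Z q = 0 := by
      refine hGvan _ ?_ _
      have := le_shift_int t (-m) hZ
      rwa [show -(A:ℤ) - m - -m = -(A:ℤ) by ring] at this
    have := congrArg (homShiftE m G Z).symm h1
    rwa [Equiv.symm_apply_apply, homShiftE_symm_zero] at this
  -- eventual vanishing against the A-objects
  have hAvan : ∀ (W : T) (b : ℤ), Good W b → ∃ I : ℕ, ∀ n, I ≤ n →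
      (∀ q : W ⟶ Aa n, q = 0) ∧ (∀ q : W ⟶ (Aa n)⟦(1:ℤ)⟧, q = 0) := by
    intro W b hW
    refine ⟨b.natAbs, fun n hn => ⟨fun q => hW _ ?_ q, fun q => hW _ ?_ q⟩⟩
    · refine le_mono' t ?_ (hAle n)
      have h1 := hσge n
      have h2 : (b.natAbs : ℤ) ≤ (n:ℤ) := by exact_mod_cast hn
      omega
    · refine le_mono' t ?_ (le_shift_up t (hAle n))
      have h1 := hσge n
      have h2 : (b.natAbs : ℤ) ≤ (n:ℤ) := by exact_mod_cast hn
      omega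
  -- eventual bijectivity of composition with cc n
  have hbijc : ∀ (W : T) (b : ℤ), Good W b → ∃ I : ℕ, ∀ n, I ≤ n →
      Function.Bijective (fun x : W ⟶ X => x ≫ cc n) := by
    intro W b hW
    obtain ⟨I, hI⟩ := hAvan W b hW
    refine ⟨I, fun n hn => ⟨?_, ?_⟩⟩
    · intro x y hxy
      dsimp at hxy
      have h0 : (x - y) ≫ cc n = 0 := by rw [Preadditive.sub_comp, hxy, sub_self]
      obtain ⟨g, hg⟩ : ∃ g : W ⟶ Aa n, x - y = g ≫ ff n :=
        Triangle.coyoneda_exact₂ _ (htri n) (x - y) h0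
      rw [(hI n hn).1 g, zero_comp] at hg
      rwa [sub_eq_zero] at hg
    · intro u
      have hu0 : u ≫ (Triangle.mk (ff n) (cc n) (hh n)).mor₃ = 0 := (hI n hn).2 _
      obtain ⟨g, hg⟩ := Triangle.coyoneda_exact₃ _ (htri n) u hu0
      exact ⟨g, hg.symm⟩
  -- eventual bijectivity of composition with pp n
  have hbijt : ∀ (W : T) (b : ℤ), Good W b → ∃ I : ℕ, (∀ n, I ≤ n →
      Function.Bijective (fun x : W ⟶ X => x ≫ cc n)) ∧ (∀ n, I ≤ n →
      Function.Bijective (fun x : W ⟶ Bb (n+1) => x ≫ pp n)) := by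
    intro W b hW
    obtain ⟨I, hI⟩ := hbijc W b hW
    refine ⟨I, hI, fun n hn => ?_⟩
    have hbn : Function.Bijective (fun x : W ⟶ X => x ≫ cc n) := hI n hn
    have hbn1 : Function.Bijective (fun x : W ⟶ X => x ≫ cc (n+1)) := hI (n+1) (by omega)
    set e := Equiv.ofBijective _ hbn1 with he
    have hcomp : (fun x : W ⟶ Bb (n+1) => x ≫ pp n)
        = (fun y : W ⟶ X => y ≫ cc n) ∘ e.symm := by
      funext x
      have h1 : (e.symm x) ≫ cc (n+1) = x := e.apply_symm_apply x
      dsimp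
      rw [← hp n, ← assoc, h1]
    rw [hcomp]
    exact hbn.comp e.symm.bijective
  -- surjectivity of composition with β
  set β := oneMinusShiftProd Bb pp with hβ
  have hβπ : ∀ (W : T) (u : W ⟶ ∏ᶜ Bb) (n : ℕ),
      (u ≫ β) ≫ Pi.π Bb n = u ≫ Pi.π Bb n - (u ≫ Pi.π Bb (n+1)) ≫ pp n := by
    intro W u n
    simp [hβ, oneMinusShiftProd, Preadditive.sub_comp, Preadditive.comp_sub]
  have hsurjβ : ∀ (W : T) (b : ℤ), Good W b →
      Function.Surjective (fun u : W ⟶ ∏ᶜ Bb => u ≫ β) := by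
    intro W b hW y₀
    obtain ⟨I, hIc, hIt⟩ := hbijt W b hW
    obtain ⟨x, hx⟩ := exists_solution (A := fun i => (W ⟶ Bb i))
      (fun i v => v ≫ pp i) I (fun j => hIt (I + j) (by omega)) (fun i => y₀ ≫ Pi.π Bb i)
    refine ⟨Pi.lift x, ?_⟩
    apply Pi.hom_ext
    intro n
    rw [hβπ]
    simp only [Pi.lift_π]
    rw [hx n]
    abel
  -- the homotopy limit triangle
  obtain ⟨L, α, δL, hTL⟩ := distinguished_cocone_triangle₁ β
  have hlift0 : Pi.lift cc ≫ β = 0 := by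
    apply Pi.hom_ext
    intro n
    rw [zero_comp, hβπ]
    simp only [Pi.lift_π]
    rw [hp n, sub_self]
  obtain ⟨φ, hφ⟩ : ∃ φ : X ⟶ L, Pi.lift cc = φ ≫ α :=
    Triangle.coyoneda_exact₂ _ hTL (Pi.lift cc) hlift0
  have hφc : ∀ n, φ ≫ α ≫ Pi.π Bb n = cc n := by
    intro n
    rw [← assoc, ← hφ, Pi.lift_π]
  -- injectivity of composition with φ
  have hinjφ : ∀ (W : T) (b : ℤ), Good W b → ∀ x : W ⟶ X, x ≫ φ = 0 → x = 0 := by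
    intro W b hW x hx
    obtain ⟨I, hI⟩ := hbijc W b hW
    have h1 : x ≫ cc I = 0 := by
      rw [← hφc I, ← assoc, ← assoc, hx, zero_comp, zero_comp]
    have h2 := (hI I le_rfl).1
    apply h2
    dsimp
    rw [h1]
    simp
  -- surjectivity of composition with φ
  have hsurjφ : ∀ (W : T) (b : ℤ), Good W b → ∀ u : W ⟶ L, ∃ x : W ⟶ X, x ≫ φ = u := by
    intro W b hW u
    obtain ⟨I, hIc, hIt⟩ := hbijt W b hW
    have hαβ : α ≫ β = 0 := comp_distTriang_mor_zero₁₂ _ hTL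
    have hucomp : ∀ i, u ≫ α ≫ Pi.π Bb i = (u ≫ α ≫ Pi.π Bb (i+1)) ≫ pp i := by
      intro i
      have h00 : (u ≫ α) ≫ β = 0 := by
        rw [assoc, hαβ, comp_zero]
      have h0 : ((u ≫ α) ≫ β) ≫ Pi.π Bb i = 0 := by
        rw [h00, zero_comp]
      rw [hβπ] at h0
      rw [sub_eq_zero] at h0
      simpa [assoc] using h0
    set e := Equiv.ofBijective _ (hIc I le_rfl) with he
    set x := e.symm (u ≫ α ≫ Pi.π Bb I) with hxdef
    have hx0 : x ≫ cc I = u ≫ α ≫ Pi.π Bb I := e.apply_symm_apply _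
    have hup : ∀ j : ℕ, x ≫ cc (I + j) = u ≫ α ≫ Pi.π Bb (I + j) := by
      intro j
      induction j with
      | zero => exact hx0
      | succ j ih =>
        have hinj := (hIt (I + j) (by omega)).1
        apply hinj
        show (x ≫ cc (I+j+1)) ≫ pp (I+j) = (u ≫ α ≫ Pi.π Bb (I+j+1)) ≫ pp (I+j)
        rw [← hucomp (I + j), ← ih, assoc, hp (I + j)]
    have hallQ : ∀ i, x ≫ cc i = u ≫ α ≫ Pi.π Bb i := by
      have hdown : ∀ k i, i + k = I → x ≫ cc i = u ≫ α ≫ Pi.π Bb i := by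
        intro k
        induction k with
        | zero =>
          intro i hi
          have : i = I := by omega
          subst this
          exact hx0
        | succ k ih =>
          intro i hi
          have hnext := ih (i+1) (by omega)
          rw [hucomp i, ← hnext, assoc, hp i]
      intro i
      by_cases h : I ≤ i
      · obtain ⟨j, rfl⟩ : ∃ j, i = I + j := ⟨i - I, by omega⟩
        exact hup j
      · exact hdown (I - i) i (by omega)
    have hα0 : (u - x ≫ φ) ≫ α = 0 := by
      apply Pi.hom_ext
      intro n
      simp only [zero_comp, Preadditive.sub_comp, assoc]
      rw [hφc n, hallQ n, sub_self]
    -- factor u - x ≫ φ through the inv-rotated triangle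
    have hinv1 := inv_rot_of_distTriang _ hTL
    obtain ⟨w, hw⟩ : ∃ w : W ⟶ (∏ᶜ Bb)⟦(-1:ℤ)⟧, u - x ≫ φ = w ≫ (Triangle.mk α β δL).invRotate.mor₁ :=
      Triangle.coyoneda_exact₂ _ hinv1 (u - x ≫ φ) hα0
    have hinv2 := inv_rot_of_distTriang _ hinv1
    have hz12 := comp_distTriang_mor_zero₁₂ _ hinv2
    set J := ((shiftFunctorCompIsoId T (-1) 1 (by ring)).inv.app (∏ᶜ Bb))⟦(-1:ℤ)⟧' ≫
      (shiftFunctorCompIsoId T 1 (-1) (by ring)).hom.app ((∏ᶜ Bb)⟦(-1:ℤ)⟧) with hJ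
    have hJiso : IsIso J := by
      rw [hJ]
      infer_instance
    have hmor : ((Triangle.mk α β δL).invRotate.invRotate).mor₁ = -(β⟦(-1:ℤ)⟧' ≫ J) := by
      show -((β ≫ (shiftEquiv T 1).counitIso.inv.app (∏ᶜ Bb))⟦(-1:ℤ)⟧') ≫
        (shiftEquiv T 1).unitIso.inv.app ((∏ᶜ Bb)⟦(-1:ℤ)⟧) = _
      rw [Functor.map_comp]
      simp [assoc, shiftEquiv', hJ]
      exact assoc _ _ _
    have hsurjβ1 : ∀ z : W ⟶ (∏ᶜ Bb)⟦(-1:ℤ)⟧,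
        ∃ v : W ⟶ (∏ᶜ Bb)⟦(-1:ℤ)⟧, v ≫ β⟦(-1:ℤ)⟧' = z := by
      intro z
      have hGW1 : Good (W⟦(1:ℤ)⟧) (b - 1) := hGshift W b 1 hW
      obtain ⟨s, hs⟩ := hsurjβ (W⟦(1:ℤ)⟧) (b-1) hGW1 ((homShiftE 1 W (∏ᶜ Bb)).symm z)
      dsimp at hs
      refine ⟨homShiftE 1 W (∏ᶜ Bb) s, ?_⟩
      have hnat := homShiftE_comp 1 W (∏ᶜ Bb) (∏ᶜ Bb) s β
      rw [← hnat, hs, Equiv.apply_symm_apply]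
    obtain ⟨v, hv⟩ := hsurjβ1 (-(w ≫ CategoryTheory.inv J))
    have hweq' : v ≫ (-(β⟦(-1:ℤ)⟧' ≫ J)) = w := by
      rw [Preadditive.comp_neg, ← assoc, hv]
      simp
    have hweq : v ≫ ((Triangle.mk α β δL).invRotate.invRotate).mor₁ = w :=
      (congrArg (fun k => v ≫ k) hmor).trans hweq'
    have hmor2 : ((Triangle.mk α β δL).invRotate.invRotate).mor₂
        = (Triangle.mk α β δL).invRotate.mor₁ := rfl
    have hzero : u - x ≫ φ = 0 := by
      have hz12' : ((Triangle.mk α β δL).invRotate.invRotate).mor₁ ≫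
          (Triangle.mk α β δL).invRotate.mor₁ = 0 := hz12
      rw [hw, ← hweq]
      exact (assoc _ _ _).trans ((congrArg (fun k => v ≫ k) hz12').trans comp_zero)
    exact ⟨x, (sub_eq_zero.mp hzero).symm⟩

  -- the cone of φ is zero
  obtain ⟨W₀, π₀, ω, hTφ⟩ := distinguished_cocone_triangle φ
  have hWzero : IsZero W₀ := by
    apply hGgen
    intro m q
    have hrot := rot_of_distTriang _ hTφ
    have hωφ : ω ≫ φ⟦(1:ℤ)⟧' = 0 := by
      have h23 : ω ≫ (-(φ⟦(1:ℤ)⟧')) = 0 := comp_distTriang_mor_zero₂₃ _ hrot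
      rw [Preadditive.comp_neg, neg_eq_zero] at h23
      exact h23
    have hGc : Good ((G⟦(m:ℤ)⟧)⟦(-1:ℤ)⟧) (-(A:ℤ) - m + 1) := by
      have := hGshift (G⟦(m:ℤ)⟧) (-(A:ℤ) - m) (-1) (hGoodG m)
      rwa [show -(A:ℤ) - m - (-1) = -(A:ℤ) - m + 1 by ring] at this
    have hr0 : q ≫ ω = 0 := by
      have h1 : (q ≫ ω) ≫ φ⟦(1:ℤ)⟧' = 0 := by rw [assoc, hωφ, comp_zero]
      have hv1 : homShiftE (-1) (G⟦(m:ℤ)⟧) X ((homShiftE (-1) (G⟦(m:ℤ)⟧) X).symm (q ≫ ω))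
          = q ≫ ω := (homShiftE (-1) (G⟦(m:ℤ)⟧) X).apply_symm_apply _
      have hv2 : homShiftE (-1) (G⟦(m:ℤ)⟧) L
          (((homShiftE (-1) (G⟦(m:ℤ)⟧) X).symm (q ≫ ω)) ≫ φ) = 0 := by
        rw [homShiftE_comp, hv1]
        exact h1
      have hv3 : ((homShiftE (-1) (G⟦(m:ℤ)⟧) X).symm (q ≫ ω)) ≫ φ = 0 := by
        have := congrArg (homShiftE (-1) (G⟦(m:ℤ)⟧) L).symm hv2
        rwa [Equiv.symm_apply_apply, homShiftE_symm_zero] at this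
      have hv0 := hinjφ _ _ hGc _ hv3
      rw [← hv1, hv0, homShiftE_zero]
    have hq1 : q ≫ (Triangle.mk φ π₀ ω).rotate.mor₂ = 0 := hr0
    obtain ⟨g, hg⟩ : ∃ g : G⟦(m:ℤ)⟧ ⟶ L, q = g ≫ π₀ := Triangle.coyoneda_exact₂ _ hrot q hq1
    obtain ⟨x, hx⟩ := hsurjφ (G⟦(m:ℤ)⟧) (-(A:ℤ) - m) (hGoodG m) g
    have hz01 : φ ≫ π₀ = 0 := comp_distTriang_mor_zero₁₂ _ hTφ
    rw [hg, ← hx, assoc, hz01, comp_zero]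
  -- φ is an isomorphism
  have hπ0 : π₀ = 0 := hWzero.eq_zero_of_tgt π₀
  obtain ⟨ρ, hρ⟩ : ∃ ρ : L ⟶ X, 𝟙 L = ρ ≫ φ :=
    Triangle.coyoneda_exact₂ _ hTφ (𝟙 L) (by simp only [Triangle.mk_mor₂, hπ0]; exact comp_zero)
  have hk : ((φ ≫ ρ) - 𝟙 X) ≫ φ = 0 := by
    rw [Preadditive.sub_comp, assoc, ← hρ, comp_id, id_comp, sub_self]
  have hinvφtri := inv_rot_of_distTriang _ hTφ
  obtain ⟨v, hv⟩ : ∃ v : X ⟶ W₀⟦(-1:ℤ)⟧, (φ ≫ ρ) - 𝟙 X = v ≫ (Triangle.mk φ π₀ ω).invRotate.mor₁ :=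
    Triangle.coyoneda_exact₂ _ hinvφtri ((φ ≫ ρ) - 𝟙 X) hk
  have hWz' : IsZero ((W₀ : T)⟦(-1:ℤ)⟧) := by
    rw [IsZero.iff_id_eq_zero]
    have h5 : 𝟙 ((W₀ : T)⟦(-1:ℤ)⟧) = (𝟙 W₀)⟦(-1:ℤ)⟧' := by simp
    rw [h5, (IsZero.iff_id_eq_zero W₀).mp hWzero]
    simp
  have hv0 : v = 0 := hWz'.eq_zero_of_tgt v
  have hφρ : φ ≫ ρ = 𝟙 X := by
    rw [hv0] at hv
    exact sub_eq_zero.mp (hv.trans zero_comp)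
  have hφiso : IsIso φ := ⟨ρ, hφρ, hρ.symm⟩
  haveI := hφiso
  -- conclusion
  refine ⟨Bb, pp, fun n => ⟨hBtbc n, hBle n⟩, ?_, cc, hp, δL ≫ CategoryTheory.inv (φ⟦(1:ℤ)⟧'), ?_⟩
  · -- the Cauchy condition
    intro i
    refine ⟨i, ?_⟩
    intro n hn D g h hD
    apply le_of_vanishing t i
    intro Y hY ψ
    have hσn : (i:ℤ) ≤ (σf n : ℤ) := by
      have h1 := hσge n
      have h2 : (i:ℤ) ≤ (n:ℤ) := by exact_mod_cast hn
      omega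
    have hσn1 : (σf n : ℤ) ≤ (σf (n+1) : ℤ) := by
      have := hσsucc n
      omega
    have s1 : ∀ u : (Aa n)⟦(1:ℤ)⟧ ⟶ Y, u = 0 := by
      intro u
      refine hom_zero' t ?_ (le_shift_up t (hAle n)) hY u
      omega
    have s2 : ∀ u : ((Aa (n+1))⟦(1:ℤ)⟧)⟦(1:ℤ)⟧ ⟶ Y, u = 0 := by
      intro u
      refine hom_zero' t ?_ (le_shift_up t (le_shift_up t (hAle (n+1)))) hY u
      omega
    -- cc n ≫ g = 0, so g factors through hh n
    have h11 : pp n ≫ g = 0 := comp_distTriang_mor_zero₁₂ _ hD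
    have h12 : cc n ≫ g = 0 := by rw [← hp n, assoc, h11, comp_zero]
    obtain ⟨q, hqq⟩ : ∃ q : (Aa n)⟦(1:ℤ)⟧ ⟶ D, g = hh n ≫ q := Triangle.yoneda_exact₃ _ (htri n) g h12
    -- g ≫ ψ = 0, so ψ factors through h
    have h13 : g ≫ ψ = 0 := by
      rw [hqq, assoc, s1 (q ≫ ψ), comp_zero]
    obtain ⟨χ, hχ⟩ : ∃ χ : (Bb (n+1))⟦(1:ℤ)⟧ ⟶ Y, ψ = h ≫ χ := Triangle.yoneda_exact₃ _ hD ψ h13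
    -- correct χ 
    have hr3 := rot_of_distTriang _ (rot_of_distTriang _ (rot_of_distTriang _ (htri n)))
    have hμ0 : ((Triangle.mk (ff n) (cc n) (hh n)).rotate.rotate.rotate).mor₁ ≫
        ((cc (n+1))⟦(1:ℤ)⟧' ≫ χ) = 0 := s1 _
    obtain ⟨θ', hθ'⟩ : ∃ θ' : (Bb n)⟦(1:ℤ)⟧ ⟶ Y,
        (cc (n+1))⟦(1:ℤ)⟧' ≫ χ = (-((cc n)⟦(1:ℤ)⟧')) ≫ θ' :=
      Triangle.yoneda_exact₂ _ hr3 ((cc (n+1))⟦(1:ℤ)⟧' ≫ χ) hμ0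
    -- hθ' : cc(n+1)⟦1⟧ ≫ χ = (-(cc n)⟦1⟧) ≫ θ'
    have hχ'0 : (cc (n+1))⟦(1:ℤ)⟧' ≫ (χ + (pp n)⟦(1:ℤ)⟧' ≫ θ') = 0 := by
      rw [Preadditive.comp_add, hθ', ← assoc, ← Functor.map_comp, hp n]
      simp
    have hr4 := rot_of_distTriang _ (rot_of_distTriang _ (rot_of_distTriang _
      (rot_of_distTriang _ (htri (n+1)))))
    have hμ4 : ((Triangle.mk (ff (n+1)) (cc (n+1)) (hh (n+1))).rotate.rotate.rotate.rotate).mor₁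
        ≫ (χ + (pp n)⟦(1:ℤ)⟧' ≫ θ') = 0 := by
      show (-((cc (n+1))⟦(1:ℤ)⟧')) ≫ (χ + (pp n)⟦(1:ℤ)⟧' ≫ θ') = 0
      rw [Preadditive.neg_comp, hχ'0, neg_zero]
    obtain ⟨ξ, hξ⟩ := Triangle.yoneda_exact₂ _ hr4 (χ + (pp n)⟦(1:ℤ)⟧' ≫ θ') hμ4
    have hξ0 : ξ = 0 := s2 ξ
    have hχval : χ = -((pp n)⟦(1:ℤ)⟧' ≫ θ') := by
      have : χ + (pp n)⟦(1:ℤ)⟧' ≫ θ' = 0 := by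
        rw [hξ, hξ0]
        exact comp_zero
      linear_combination (norm := abel) this
    have hDrot := rot_of_distTriang _ hD
    have hpp1 : h ≫ (pp n)⟦(1:ℤ)⟧' = 0 := by
      have h23 : h ≫ (-((pp n)⟦(1:ℤ)⟧')) = 0 := comp_distTriang_mor_zero₂₃ _ hDrot
      rw [Preadditive.comp_neg, neg_eq_zero] at h23
      exact h23
    rw [hχ, hχval, Preadditive.comp_neg, ← assoc, hpp1, zero_comp, neg_zero]
  · -- the distinguished triangle
    refine isomorphic_distinguished _ hTL _ ?_
    refine Triangle.isoMk _ _ (asIso φ : X ≅ L) (Iso.refl _) (Iso.refl _) ?_ ?_ ?_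
    · dsimp
      exact (comp_id _).trans hφ
    · exact (comp_id _).trans (id_comp _).symm
    · dsimp
      exact ((assoc _ _ _).trans ((congrArg (fun k => δL ≫ k) (IsIso.inv_hom_id ((shiftFunctor T 1).map φ))).trans
        (comp_id _))).trans (id_comp _).symm




end Stmt13
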